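/- arXiv:2511.17280 — 2 statements merged into one kernel-verified Lean document; each statement's English description precedes it below -/
import Mathlib

section
/- Let α ∈ (0,1) and λ > 0, let f(x) = (λ^α/Γ(α))·x^{α−1}·e^{−λx} for x > 0 be the Gamma(α, λ) density and S(t) = ∫_t^∞ f(x) dx its survival function, and set r(t) = f(t)/S(t) for t > 0. Then r is strictly decreasing on (0, ∞); equivalently, for every t > 0 one has t·f(t)/(λt − α + 1) < S(t). -/
open MeasureTheory Set

private lemma gamma_fr_aux (A U SS x : ℝ) (hx : x ≠ 0) :
    (-A * U / x) * SS - A * (-A) = (A / x) * (x * A - U * SS) := by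
  field_simp; ring

/-- For the Gamma(α, λ) density `f` with `α ∈ (0,1)`, `λ > 0`, survival function
`S(t) = ∫_t^∞ f`, the failure rate `r(t) = f(t)/S(t)` is strictly decreasing on `(0,∞)`;
equivalently, `t f(t)/(λ t - α + 1) < S(t)` for every `t > 0`. -/
theorem gamma_failure_rate_strictAnti
    (α lam : ℝ) (hα : α ∈ Set.Ioo (0 : ℝ) 1) (hlam : 0 < lam)
    (f : ℝ → ℝ)
    (hf : ∀ x > (0 : ℝ), f x = lam ^ α / Real.Gamma α * x ^ (α - 1) * Real.exp (-lam * x))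
    (S : ℝ → ℝ) (hS : ∀ t, S t = ∫ x in Set.Ioi t, f x)
    (r : ℝ → ℝ) (hr : ∀ t > (0 : ℝ), r t = f t / S t) :
    StrictAntiOn r (Set.Ioi (0 : ℝ)) ∧
      ∀ t > (0 : ℝ), t * f t / (lam * t - α + 1) < S t := by
  obtain ⟨hα0, hα1⟩ := hα
  set c : ℝ := lam ^ α / Real.Gamma α with hc
  have hc0 : 0 < c := div_pos (Real.rpow_pos_of_pos hlam α) (Real.Gamma_pos_of_pos hα0)
  set F : ℝ → ℝ := fun x => c * x ^ (α - 1) * Real.exp (-lam * x) with hFdef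
  set u : ℝ → ℝ := fun x => lam * x - α + 1 with hudef
  have hupos : ∀ x > (0 : ℝ), 0 < u x := by
    intro x hx; simp only [hudef]; nlinarith
  have hFpos : ∀ x > (0 : ℝ), 0 < F x := by
    intro x hx
    exact mul_pos (mul_pos hc0 (Real.rpow_pos_of_pos hx _)) (Real.exp_pos _)
  have hfF : ∀ x > (0 : ℝ), f x = F x := by
    intro x hx; rw [hf x hx]
  have hFmeas : Measurable F := by
    exact ((measurable_id.pow_const _).const_mul c).mul
      ((measurable_id.const_mul (-lam)).exp)
  have hFcontAt : ∀ x > (0 : ℝ), ContinuousAt F x := by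
    intro x hx
    exact ((Real.continuousAt_rpow_const x (α - 1) (Or.inl hx.ne')).const_mul c).mul
      ((Real.continuous_exp.comp (continuous_const.mul continuous_id : Continuous fun y : ℝ => -lam * y)).continuousAt)
  have hFcontOn : ∀ s : Set ℝ, s ⊆ Ioi 0 → ContinuousOn F s := by
    intro s hs
    exact fun x hx => ((hFcontAt x (hs hx)).continuousWithinAt)
  have hFint : ∀ t > (0 : ℝ), IntegrableOn F (Ioi t) := by
    intro t ht
    have hg : IntegrableOn (fun x => (c * t ^ (α - 1)) * Real.exp (-lam * x)) (Ioi t) :=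
      (exp_neg_integrableOn_Ioi t hlam).const_mul _
    refine hg.mono' (hFmeas.aestronglyMeasurable) ?_
    filter_upwards [ae_restrict_mem measurableSet_Ioi] with x hx
    have hx0 : (0 : ℝ) < x := ht.trans hx
    have hb : x ^ (α - 1) ≤ t ^ (α - 1) :=
      Real.rpow_le_rpow_of_nonpos ht (le_of_lt hx) (by linarith)
    rw [Real.norm_eq_abs, abs_of_pos (hFpos x hx0)]
    have : c * x ^ (α - 1) ≤ c * t ^ (α - 1) := by
      exact mul_le_mul_of_nonneg_left hb hc0.le
    exact mul_le_mul_of_nonneg_right this (Real.exp_pos _).le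
  have hSF : ∀ t > (0 : ℝ), S t = ∫ x in Ioi t, F x := by
    intro t ht
    rw [hS t]
    refine setIntegral_congr_fun measurableSet_Ioi fun x hx => hfF x (ht.trans hx)
  have hSsplit : ∀ t > (0 : ℝ), ∀ T, t ≤ T →
      (∫ x in Ioi t, F x) = (∫ x in t..T, F x) + ∫ x in Ioi T, F x := by
    intro t ht T hT
    have hT0 : (0 : ℝ) < T := lt_of_lt_of_le ht hT
    rw [intervalIntegral.integral_of_le hT, ← setIntegral_union
      (Ioc_disjoint_Ioi le_rfl) measurableSet_Ioi
      ((hFint t ht).mono_set Ioc_subset_Ioi_self) (hFint T hT0),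
      Ioc_union_Ioi_eq_Ioi hT]
  have hSpos : ∀ t > (0 : ℝ), 0 < S t := by
    intro t ht
    rw [hSF t ht]
    rw [setIntegral_pos_iff_support_of_nonneg_ae ?_ (hFint t ht)]
    · have hsub : Ioi t ⊆ Function.support F ∩ Ioi t :=
        fun x hx => ⟨(hFpos x (ht.trans hx)).ne', hx⟩
      refine lt_of_lt_of_le ?_ (measure_mono hsub)
      simp [Real.volume_Ioi]
    · filter_upwards [ae_restrict_mem measurableSet_Ioi] with x hx
      exact (hFpos x (ht.trans hx)).le
  -- derivative of G
  set G : ℝ → ℝ := fun x => x * F x / u x with hGdef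
  have hFd : ∀ x > (0 : ℝ), HasDerivAt F (-F x * u x / x) x := by
    intro x hx
    have h1 : HasDerivAt (fun y : ℝ => c * y ^ (α - 1))
        (c * ((α - 1) * x ^ (α - 1 - 1))) x :=
      (Real.hasDerivAt_rpow_const (Or.inl hx.ne')).const_mul c
    have h2 : HasDerivAt (fun y : ℝ => Real.exp (-lam * y))
        (Real.exp (-lam * x) * (-lam)) x := by
      have := ((hasDerivAt_id x).const_mul (-lam)).exp
      simpa using this
    have := h1.mul h2
    refine this.congr_deriv ?_
    rw [Real.rpow_sub_one hx.ne' (α - 1)]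
    simp only [hudef, hFdef]
    field_simp
    ring
  have hGd : ∀ x > (0 : ℝ), HasDerivAt G ((1 - α) * F x / (u x) ^ 2 - F x) x := by
    intro x hx
    have hux := hupos x hx
    have hN : HasDerivAt (fun y => y * F y) (1 * F x + x * (-F x * u x / x)) x :=
      (hasDerivAt_id x).mul (hFd x hx)
    have hu : HasDerivAt u lam x := by
      have := (((hasDerivAt_id x).const_mul lam).sub_const α).add_const 1
      simpa [hudef] using this
    have := hN.div hu hux.ne'
    refine this.congr_deriv ?_
    have hxu : x * (-F x * u x / x) = -F x * u x := by field_simp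
    rw [hxu]
    field_simp
    ring
  -- key inequality : G t < S t for t > 0
  have key : ∀ t > (0 : ℝ), G t < S t := by
    intro t ht
    set H : ℝ → ℝ := fun x => (1 - α) * F x / (u x) ^ 2 with hHdef
    have hHcont : ∀ s : Set ℝ, s ⊆ Ioi 0 → ContinuousOn H s := by
      intro s hs
      refine ((hFcontOn s hs).const_smul (1 - α)).div ?_ ?_
      · exact Continuous.continuousOn (by fun_prop)
      · exact fun x hx => (pow_pos (hupos x (hs hx)) 2).ne'
    have hHpos : ∀ x > (0 : ℝ), 0 < H x := by
      intro x hx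
      exact div_pos (mul_pos (by linarith) (hFpos x hx)) (pow_pos (hupos x hx) 2)
    have hIcc : ∀ T, t ≤ T → Icc t T ⊆ Ioi 0 := fun T hT x hx => lt_of_lt_of_le ht hx.1
    have hftc : ∀ T, t ≤ T → (∫ x in t..T, F x) = G t - G T + ∫ x in t..T, H x := by
      intro T hT
      have huIcc : uIcc t T = Icc t T := uIcc_of_le hT
      have hHi : IntervalIntegrable H volume t T := by
        refine (hHcont _ ?_).intervalIntegrable
        rw [huIcc]; exact hIcc T hT
      have hFi : IntervalIntegrable F volume t T := by
        refine (hFcontOn _ ?_).intervalIntegrable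
        rw [huIcc]; exact hIcc T hT
      have hsub : (∫ x in t..T, (H x - F x)) = G T - G t := by
        refine intervalIntegral.integral_eq_sub_of_hasDerivAt ?_ (hHi.sub hFi)
        intro x hx
        rw [huIcc] at hx
        exact hGd x (hIcc T hT hx)
      rw [intervalIntegral.integral_sub hHi hFi] at hsub
      linarith
    set c₀ : ℝ := ∫ x in t..(t + 1), H x with hc₀
    have hc₀pos : 0 < c₀ := by
      refine intervalIntegral.intervalIntegral_pos_of_pos_on ?_ ?_ (by linarith)
      · refine (hHcont _ ?_).intervalIntegrable
        rw [uIcc_of_le (by linarith)]; exact hIcc _ (by linarith)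
      · intro x hx; exact hHpos x (lt_trans ht hx.1)
    have hub : ∀ T, t + 1 ≤ T → G t - G T + c₀ ≤ S t := by
      intro T hT
      have htT : t ≤ T := by linarith
      have hT0 : (0 : ℝ) < T := lt_of_lt_of_le (by linarith) hT
      have h1 : c₀ ≤ ∫ x in t..T, H x := by
        refine intervalIntegral.integral_mono_interval le_rfl (by linarith) hT ?_ ?_
        · filter_upwards [ae_restrict_mem measurableSet_Ioc] with x hx
          exact (hHpos x (lt_trans ht hx.1)).le
        · refine (hHcont _ ?_).intervalIntegrable
          rw [uIcc_of_le htT]; exact hIcc T htT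
      have h2 : (0 : ℝ) ≤ ∫ x in Ioi T, F x :=
        setIntegral_nonneg measurableSet_Ioi fun x hx => (hFpos x (hT0.trans hx)).le
      have h3 := hftc T htT
      have h4 := hSsplit t ht T htT
      rw [hSF t ht]
      linarith
    have hGlim : Filter.Tendsto G Filter.atTop (nhds 0) := by
      have hbound : ∀ᶠ T in Filter.atTop, ‖G T‖ ≤ (c / lam) * (T ^ (α - 1) * Real.exp (-lam * T)) := by
        filter_upwards [Filter.eventually_gt_atTop (0 : ℝ)] with T hT
        have hu' := hupos T hT
        have hG0 : 0 ≤ G T := by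
          exact div_nonneg (mul_nonneg hT.le (hFpos T hT).le) hu'.le
        rw [Real.norm_eq_abs, abs_of_nonneg hG0]
        have hul : lam * T ≤ u T := by simp only [hudef]; linarith
        have : G T ≤ T * F T / (lam * T) := by
          refine div_le_div_of_nonneg_left (mul_nonneg hT.le (hFpos T hT).le) (by positivity) hul
        calc G T ≤ T * F T / (lam * T) := this
          _ = (c / lam) * (T ^ (α - 1) * Real.exp (-lam * T)) := by
              simp only [hFdef]; field_simp
      have hlim2 : Filter.Tendsto (fun T : ℝ => (c / lam) * (T ^ (α - 1) * Real.exp (-lam * T)))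
          Filter.atTop (nhds 0) := by
        have := (tendsto_rpow_mul_exp_neg_mul_atTop_nhds_zero (α - 1) lam hlam).const_mul (c / lam)
        simpa using this
      refine squeeze_zero_norm' hbound hlim2
    have hfinal : G t + c₀ ≤ S t := by
      have : Filter.Tendsto (fun T => G t - G T + c₀) Filter.atTop (nhds (G t + c₀)) := by
        have := ((tendsto_const_nhds (x := G t) (f := Filter.atTop)).sub hGlim).add_const c₀
        simpa using this
      refine le_of_tendsto this ?_
      filter_upwards [Filter.eventually_ge_atTop (t + 1)] with T hT
      exact hub T hT
    linarith
  have key' : ∀ t > (0 : ℝ), t * f t / (lam * t - α + 1) < S t := by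
    intro t ht
    have := key t ht
    rw [hGdef] at this
    rw [hfF t ht]
    exact this
  refine ⟨?_, key'⟩
  -- S has derivative -F
  have hSd : ∀ x > (0 : ℝ), HasDerivAt S (-F x) x := by
    intro x hx
    set a : ℝ := x / 2 with ha
    have ha0 : 0 < a := by positivity
    have hax : a < x := by simp only [ha]; linarith
    have hΦd : HasDerivAt (fun y => ∫ s in a..y, F s) (F x) x := by
      refine intervalIntegral.integral_hasDerivAt_right ?_ ?_ (hFcontAt x hx)
      · refine (hFcontOn _ ?_).intervalIntegrable
        rw [uIcc_of_le hax.le]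
        exact fun y hy => lt_of_lt_of_le ha0 hy.1
      · exact hFmeas.stronglyMeasurable.stronglyMeasurableAtFilter
    have hev : S =ᶠ[nhds x] (fun y => (∫ s in Ioi a, F s) - ∫ s in a..y, F s) := by
      filter_upwards [Ioi_mem_nhds hax] with y hy
      have hy0 : (0 : ℝ) < y := ha0.trans hy
      rw [hSF y hy0, hSsplit a ha0 y hy.le]
      ring
    have : HasDerivAt (fun y => (∫ s in Ioi a, F s) - ∫ s in a..y, F s) (-F x) x := by
      exact ((hasDerivAt_const x (∫ s in Ioi a, F s)).sub hΦd).congr_deriv (by simp)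
    exact this.congr_of_eventuallyEq hev
  -- r has negative derivative
  have hrd : ∀ x > (0 : ℝ), HasDerivAt r
      (((-F x * u x / x) * S x - F x * (-F x)) / S x ^ 2) x := by
    intro x hx
    have hfd : HasDerivAt f (-F x * u x / x) x := by
      refine (hFd x hx).congr_of_eventuallyEq ?_
      filter_upwards [Ioi_mem_nhds hx] with y hy
      exact hfF y hy
    have hrd' : HasDerivAt (fun y => f y / S y)
        (((-F x * u x / x) * S x - F x * (-F x)) / S x ^ 2) x := by
      refine (hfd.div (hSd x hx) (hSpos x hx).ne').congr_deriv ?_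
      rw [hfF x hx]
    refine hrd'.congr_of_eventuallyEq ?_
    filter_upwards [Ioi_mem_nhds hx] with y hy
    exact hr y hy
  have hderivneg : ∀ x ∈ interior (Ioi (0:ℝ)), deriv r x < 0 := by
    rw [interior_Ioi]
    intro x hx
    rw [(hrd x hx).deriv]
    have hxF := hFpos x hx
    have hxu := hupos x hx
    have hxS := hSpos x hx
    have hkey : x * F x < u x * S x := by
      have h1 := key x hx
      rw [hGdef] at h1
      calc x * F x = (x * F x / u x) * u x := by field_simp
        _ < S x * u x := by exact mul_lt_mul_of_pos_right h1 hxu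
        _ = u x * S x := mul_comm _ _
      
    have hnum : (-F x * u x / x) * S x - F x * (-F x) < 0 := by
      rw [gamma_fr_aux _ _ _ _ (ne_of_gt (mem_Ioi.mp hx))]
      exact mul_neg_of_pos_of_neg (div_pos hxF hx) (by linarith)
    exact div_neg_of_neg_of_pos hnum (pow_pos hxS 2)
  refine strictAntiOn_of_deriv_neg (convex_Ioi 0) ?_ hderivneg
  exact fun x hx => (hrd x hx).continuousAt.continuousWithinAt
end

section
/- Let α ∈ (0,1) and λ > 0, let f(x) = (λ^α/Γ(α))·x^{α−1}·e^{−λx} for x > 0 be the Gamma(α, λ) density and S(t) = ∫_t^∞ f(x) dx its survival function, and set r(t) = f(t)/S(t) for t > 0. Then r(t) > λ for every t > 0. -/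
open MeasureTheory Set

/-- For the Gamma(α, λ) density `f` with `α ∈ (0,1)`, `λ > 0`, survival function
`S(t) = ∫_t^∞ f`, the failure rate `r(t) = f(t)/S(t)` satisfies `r(t) > λ` for every `t > 0`. -/
theorem gamma_failure_rate_gt
    (α lam : ℝ) (hα : α ∈ Set.Ioo (0 : ℝ) 1) (hlam : 0 < lam)
    (f : ℝ → ℝ)
    (hf : ∀ x > (0 : ℝ), f x = lam ^ α / Real.Gamma α * x ^ (α - 1) * Real.exp (-lam * x))
    (S : ℝ → ℝ) (hS : ∀ t, S t = ∫ x in Set.Ioi t, f x)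
    (r : ℝ → ℝ) (hr : ∀ t > (0 : ℝ), r t = f t / S t) :
    ∀ t > (0 : ℝ), lam < r t := by
  intro t ht
  obtain ⟨hα0, hα1⟩ := hα
  set c := lam ^ α / Real.Gamma α with hc
  have hcpos : 0 < c := div_pos (Real.rpow_pos_of_pos hlam α) (Real.Gamma_pos_of_pos hα0)
  set g : ℝ → ℝ := fun x => c * x ^ (α - 1) * Real.exp (-lam * x) with hg
  set h : ℝ → ℝ := fun x => c * t ^ (α - 1) * Real.exp (-lam * x) with hh
  have hexp_int : IntegrableOn (fun x => Real.exp (-lam * x)) (Ioi t) :=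
    exp_neg_integrableOn_Ioi t hlam
  -- value of the exponential integral
  have hexp_val : (∫ x in Ioi t, Real.exp (-lam * x)) = Real.exp (-lam * t) / lam := by
    have hderiv : ∀ x ∈ Ici t,
        HasDerivAt (fun x => -Real.exp (-lam * x) / lam) (Real.exp (-lam * x)) x := by
      intro x _
      have h1 : HasDerivAt (fun x : ℝ => -lam * x) (-lam) x := by
        simpa using (hasDerivAt_id x).const_mul (-lam)
      have h2 := (h1.exp.neg).div_const lam
      refine h2.congr_deriv ?_
      rw [div_eq_iff hlam.ne']; ring
    have htend : Filter.Tendsto (fun x => -Real.exp (-lam * x) / lam) Filter.atTop (nhds 0) := by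
      have h1 : Filter.Tendsto (fun x : ℝ => -lam * x) Filter.atTop Filter.atBot := by
        have h0 : Filter.Tendsto (fun x : ℝ => lam * x) Filter.atTop Filter.atTop :=
          (Filter.tendsto_const_mul_atTop_of_pos hlam).mpr Filter.tendsto_id
        exact Filter.Tendsto.congr (fun x => (neg_mul lam x).symm)
          (Filter.tendsto_neg_atTop_atBot.comp h0)
      have h2 : Filter.Tendsto (fun x => Real.exp (-lam * x)) Filter.atTop (nhds 0) :=
        Real.tendsto_exp_atBot.comp h1
      have := (h2.neg).div_const lam
      simpa using this
    have := integral_Ioi_of_hasDerivAt_of_tendsto' hderiv hexp_int htend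
    rw [this]
    field_simp
    ring
  -- S t is the integral of g, and basic bounds of g by h on Ioi t
  have hgle : ∀ x ∈ Ioi t, g x ≤ h x := by
    intro x hx
    have : x ^ (α - 1) ≤ t ^ (α - 1) :=
      Real.rpow_le_rpow_of_nonpos ht (le_of_lt hx) (by linarith)
    have he : 0 < Real.exp (-lam * x) := Real.exp_pos _
    apply mul_le_mul_of_nonneg_right _ he.le
    exact mul_le_mul_of_nonneg_left this hcpos.le
  have hglt : ∀ x ∈ Ioi t, g x < h x := by
    intro x hx
    have : x ^ (α - 1) < t ^ (α - 1) :=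
      Real.rpow_lt_rpow_of_neg ht hx (by linarith)
    have he : 0 < Real.exp (-lam * x) := Real.exp_pos _
    apply mul_lt_mul_of_pos_right _ he
    exact mul_lt_mul_of_pos_left this hcpos
  have hgpos : ∀ x ∈ Ioi t, 0 < g x := by
    intro x hx
    have hx0 : 0 < x := ht.trans hx
    exact mul_pos (mul_pos hcpos (Real.rpow_pos_of_pos hx0 _)) (Real.exp_pos _)
  have hh_int : IntegrableOn h (Ioi t) := by
    simpa [hh, mul_assoc, IntegrableOn] using hexp_int.const_mul (c * t ^ (α - 1))
  have hg_cont : ContinuousOn g (Ioi t) := by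
    apply ContinuousOn.mul
    · apply ContinuousOn.mul continuousOn_const
      intro x hx
      exact (Real.continuousAt_rpow_const x _ (Or.inl (ht.trans hx).ne')).continuousWithinAt
    · exact (Real.continuous_exp.comp (continuous_const.mul continuous_id)).continuousOn
  have hg_int : IntegrableOn g (Ioi t) := by
    apply Integrable.mono hh_int
      (hg_cont.aestronglyMeasurable measurableSet_Ioi)
    filter_upwards [ae_restrict_mem measurableSet_Ioi] with x hx
    rw [Real.norm_eq_abs, Real.norm_eq_abs, abs_of_pos (hgpos x hx),
      abs_of_pos ((hgpos x hx).trans_le (hgle x hx))]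
    exact hgle x hx
  have hSg : S t = ∫ x in Ioi t, g x := by
    rw [hS]
    apply setIntegral_congr_fun measurableSet_Ioi
    intro x hx
    exact hf x (ht.trans hx)
  -- S t > 0
  have hS_pos : 0 < S t := by
    rw [hSg]
    rw [integral_pos_iff_support_of_nonneg_ae ?_ hg_int]
    · refine lt_of_lt_of_le ?_ (measure_mono (fun x hx => (hgpos x hx).ne' : Ioi t ⊆ _))
      rw [Measure.restrict_apply_self]
      simp
    · filter_upwards [ae_restrict_mem measurableSet_Ioi] with x hx
      exact (hgpos x hx).le
  -- strict inequality between the integrals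
  have hlt : (∫ x in Ioi t, g x) < ∫ x in Ioi t, h x := by
    have hd : 0 < ∫ x in Ioi t, (h - g) x := by
      rw [integral_pos_iff_support_of_nonneg_ae ?_ (hh_int.sub hg_int)]
      · refine lt_of_lt_of_le ?_ (measure_mono
          (fun x hx => (sub_pos.mpr (hglt x hx)).ne' : Ioi t ⊆ _))
        rw [Measure.restrict_apply_self]
        simp
      · filter_upwards [ae_restrict_mem measurableSet_Ioi] with x hx
        exact sub_nonneg.mpr (hgle x hx)
    simp only [Pi.sub_apply] at hd
    rw [integral_sub hh_int hg_int] at hd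
    linarith
  -- value of ∫ h
  have hh_val : (∫ x in Ioi t, h x) = c * t ^ (α - 1) * Real.exp (-lam * t) / lam := by
    rw [hh]
    simp only [mul_assoc]
    rw [integral_const_mul, integral_const_mul, hexp_val]
    ring
  have hft : f t = c * t ^ (α - 1) * Real.exp (-lam * t) := hf t ht
  have key : lam * S t < f t := by
    rw [hSg, hft]
    calc lam * ∫ x in Ioi t, g x < lam * ∫ x in Ioi t, h x := by
          exact mul_lt_mul_of_pos_left hlt hlam
      _ = c * t ^ (α - 1) * Real.exp (-lam * t) := by
          rw [hh_val]; field_simp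
  rw [hr t ht, lt_div_iff₀ hS_pos]
  linarith
end
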